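/- arXiv:2603.14556 — 4 statements merged into one kernel-verified Lean document; each statement's English description precedes it below -/
import Mathlib

section
/- Let f : H → G be a simple virtual endomorphism, i.e., H ≤ G has finite index > 1 and the only normal subgroup K of G with K ⊆ H and f(K) ⊆ K is trivial. Let A be a group, π : A ⋊ H → H the projection killing A, i : G → A ⋊ G the inclusion, and β = i ∘ f ∘ π : A ⋊ H → A ⋊ G (where the action of H on A is the restriction of an action of G on A). If M is a normal subgroup of A ⋊ G with M ⊆ A ⋊ H and β(M) ⊆ M, then M ⊆ A. -/
/-- Let `f : H → G` be a simple virtual endomorphism (`H` of finite index `> 1` in `G`,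
and the only normal subgroup `K ⊴ G` with `K ≤ H` and `f(K) ≤ K` is trivial). Let `G`
act on a group `A`, and let `β : A ⋊ H → A ⋊ G` be `i ∘ f ∘ π`. If `M ⊴ A ⋊ G` with
`M ≤ A ⋊ H` and `β(M) ≤ M`, then `M ≤ A` (i.e. the `G`-component of every element of
`M` is trivial). -/
theorem stmt_7 {G A : Type*} [Group G] [Group A] (φ : G →* MulAut A)
    (H : Subgroup G) (hfi : H.FiniteIndex) (hne : H ≠ ⊤)
    (f : H →* G)
    (hsimple : ∀ K : Subgroup G, K.Normal → ∀ hKH : K ≤ H,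
      (∀ (k : G) (hk : k ∈ K), f ⟨k, hKH hk⟩ ∈ K) → K = ⊥)
    (M : Subgroup (A ⋊[φ] G)) (hM : M.Normal)
    (hMH : ∀ m, m ∈ M → (m : A ⋊[φ] G).right ∈ H)
    (hβ : ∀ (m : A ⋊[φ] G) (hm : m ∈ M),
      (SemidirectProduct.inr (f ⟨m.right, hMH m hm⟩) : A ⋊[φ] G) ∈ M) :
    ∀ m ∈ M, (m : A ⋊[φ] G).right = 1 := by
  classical
  set K := M.map (SemidirectProduct.rightHom : A ⋊[φ] G →* G) with hKdef
  have hKnorm : K.Normal := hM.map _ SemidirectProduct.rightHom_surjective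
  have hKH : K ≤ H := by
    rintro g ⟨m, hm, rfl⟩
    exact hMH m hm
  have hfK : ∀ (k : G) (hk : k ∈ K), f ⟨k, hKH hk⟩ ∈ K := by
    rintro k ⟨m, hm, rfl⟩
    refine ⟨SemidirectProduct.inr (f ⟨m.right, hMH m hm⟩), hβ m hm, ?_⟩
    simp [SemidirectProduct.rightHom]
  have hKbot := hsimple K hKnorm hKH hfK
  intro m hm
  have hmK : (m : A ⋊[φ] G).right ∈ K := ⟨m, hm, rfl⟩
  rw [hKbot] at hmK
  simpa using hmK
end

section
/- Let r and s be nonzero integers. The subgroup s·ℤ[1/r] of the additive group ℤ[1/r] has index at most |s| (in fact, the index equals s divided by the largest factor of s composed of primes dividing r; in particular the index is finite). -/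
lemma aux_gcd_stab (r s : ℤ) (hs : s ≠ 0) (k : ℕ) :
    ∃ t : ℕ, (Int.gcd (r ^ (t + k)) s : ℤ) ∣ r ^ t := by
  set f : ℕ → ℕ := fun n => Int.gcd (r ^ n) s with hf
  have hdvd : ∀ m n : ℕ, m ≤ n → f m ∣ f n := by
    intro m n hmn
    have h1 : (f m : ℤ) ∣ r ^ n :=
      (Int.gcd_dvd_left _ _).trans (pow_dvd_pow r hmn)
    have h2 : (f m : ℤ) ∣ s := Int.gcd_dvd_right _ _
    exact_mod_cast Int.dvd_coe_gcd h1 h2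
  have hpos : ∀ n, 0 < f n := by
    intro n
    exact Int.gcd_pos_of_ne_zero_right _ hs
  have hle : ∀ n, f n ≤ s.natAbs := by
    intro n
    exact Nat.le_of_dvd (Int.natAbs_pos.mpr hs)
      (Int.natAbs_dvd_natAbs.mpr (Int.gcd_dvd_right _ _))
  have : ∃ i : ℕ, f (i * k) = f (i * k + k) := by
    by_contra hcon
    push_neg at hcon
    have hsm : StrictMono (fun i => f (i * k)) := by
      apply strictMono_nat_of_lt_succ
      intro i
      have hne := hcon i
      have hle' : f (i * k) ≤ f (i * k + k) := Nat.le_of_dvd (hpos _)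
        (hdvd (i * k) (i * k + k) (by omega))
      have : f (i * k) < f (i * k + k) := lt_of_le_of_ne hle' hne
      simpa [add_mul, one_mul] using this
    have := hsm.le_apply (x := s.natAbs + 1)
    have h2 := hle ((s.natAbs + 1) * k)
    omega
  obtain ⟨i, hi⟩ := this
  refine ⟨i * k, ?_⟩
  have : (f (i * k) : ℤ) ∣ r ^ (i * k) := Int.gcd_dvd_left _ _
  rw [show (r ^ (i * k + k)).gcd s = f (i * k) from hi.symm]
  exact this

lemma aux_cong (r s : ℤ) (hs : s ≠ 0) (a : ℤ) (k : ℕ) :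
    ∃ c m : ℤ, ∃ t : ℕ, a * r ^ t = c * r ^ (t + k) + s * m := by
  obtain ⟨t, hG⟩ := aux_gcd_stab r s hs k
  obtain ⟨w, hw⟩ : (Int.gcd (r ^ (t + k)) s : ℤ) ∣ a * r ^ t := hG.mul_left a
  have hb := Int.gcd_eq_gcd_ab (r ^ (t + k)) s
  refine ⟨Int.gcdA (r ^ (t + k)) s * w, Int.gcdB (r ^ (t + k)) s * w, t, ?_⟩
  rw [hw, hb]; ring

lemma aux_congQ (r s : ℤ) (hr : r ≠ 0) (hs : s ≠ 0) (a : ℤ) (k : ℕ) :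
    ∃ c m : ℤ, ∃ j : ℕ,
      (a : ℚ) * (r : ℚ)⁻¹ ^ k - (c : ℚ) = (s : ℚ) * ((m : ℚ) * (r : ℚ)⁻¹ ^ j) := by
  obtain ⟨c, m, t, h⟩ := aux_cong r s hs a k
  refine ⟨c, m, t + k, ?_⟩
  have hr' : (r : ℚ) ≠ 0 := Int.cast_ne_zero.mpr hr
  have h' : (a : ℚ) * (r : ℚ) ^ t = (c : ℚ) * (r : ℚ) ^ (t + k) + (s : ℚ) * m := by
    exact_mod_cast congrArg (fun z : ℤ => (z : ℚ)) h
  rw [pow_add] at h'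
  rw [pow_add]
  have e1 : (r : ℚ) ^ t * (r : ℚ)⁻¹ ^ t = 1 := by rw [← mul_pow, mul_inv_cancel₀ hr', one_pow]
  have e2 : (r : ℚ) ^ k * (r : ℚ)⁻¹ ^ k = 1 := by rw [← mul_pow, mul_inv_cancel₀ hr', one_pow]
  linear_combination ((r : ℚ)⁻¹ ^ t * (r : ℚ)⁻¹ ^ k) * h' + ((c : ℚ) - (a : ℚ) * (r : ℚ)⁻¹ ^ k) * e1
    + ((c : ℚ) * (r : ℚ) ^ t * (r : ℚ)⁻¹ ^ t) * e2

lemma aux_repr (r : ℤ) (hr : r ≠ 0) (x : ℚ)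
    (hx : x ∈ Submodule.span ℤ (Set.range fun k : ℕ => ((r : ℚ)⁻¹ ^ k))) :
    ∃ a : ℤ, ∃ k : ℕ, x = (a : ℚ) * (r : ℚ)⁻¹ ^ k := by
  have hr' : (r : ℚ) ≠ 0 := Int.cast_ne_zero.mpr hr
  induction hx using Submodule.span_induction with
  | mem x h =>
    obtain ⟨k, rfl⟩ := h
    exact ⟨1, k, by push_cast; ring⟩
  | zero => exact ⟨0, 0, by simp⟩
  | add x y hx hy ihx ihy =>
    obtain ⟨a, k, rfl⟩ := ihx
    obtain ⟨b, j, rfl⟩ := ihy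
    refine ⟨a * r ^ j + b * r ^ k, k + j, ?_⟩
    push_cast
    rw [pow_add]
    have ej : (r : ℚ) ^ j * (r : ℚ)⁻¹ ^ j = 1 := by rw [← mul_pow, mul_inv_cancel₀ hr', one_pow]
    have ek : (r : ℚ) ^ k * (r : ℚ)⁻¹ ^ k = 1 := by rw [← mul_pow, mul_inv_cancel₀ hr', one_pow]
    linear_combination (-(a : ℚ) * (r : ℚ)⁻¹ ^ k) * ej + (-(b : ℚ) * (r : ℚ)⁻¹ ^ j) * ek
  | smul z x hx ih =>
    obtain ⟨a, k, rfl⟩ := ih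
    exact ⟨z * a, k, by push_cast [zsmul_eq_mul]; ring⟩

/-- For nonzero integers `r` and `s`, the subgroup `s·ℤ[1/r]` of the additive group
`ℤ[1/r] ⊆ ℚ` has finite index, at most `|s|`. -/
theorem stmt_14 (r s : ℤ) (hr : r ≠ 0) (hs : s ≠ 0) :
    (((Submodule.span ℤ (Set.range fun k : ℕ => ((r : ℚ)⁻¹ ^ k))).toAddSubgroup.map
        (AddMonoidHom.mulLeft (s : ℚ))).relIndex
      (Submodule.span ℤ (Set.range fun k : ℕ => ((r : ℚ)⁻¹ ^ k))).toAddSubgroup ≤ s.natAbs) ∧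
    (((Submodule.span ℤ (Set.range fun k : ℕ => ((r : ℚ)⁻¹ ^ k))).toAddSubgroup.map
        (AddMonoidHom.mulLeft (s : ℚ))).relIndex
      (Submodule.span ℤ (Set.range fun k : ℕ => ((r : ℚ)⁻¹ ^ k))).toAddSubgroup ≠ 0) := by
  have hr' : (r : ℚ) ≠ 0 := Int.cast_ne_zero.mpr hr
  set M := Submodule.span ℤ (Set.range fun k : ℕ => ((r : ℚ)⁻¹ ^ k)) with hMdef
  set K := M.toAddSubgroup with hKdef
  set H := K.map (AddMonoidHom.mulLeft (s : ℚ)) with hHdef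
  set n := s.natAbs with hndef
  haveI : NeZero n := ⟨Int.natAbs_ne_zero.mpr hs⟩
  have hpow : ∀ k : ℕ, (r : ℚ)⁻¹ ^ k ∈ M := fun k => Submodule.subset_span ⟨k, rfl⟩
  have h1 : (1 : ℚ) ∈ M := by simpa using hpow 0
  have hmemM : ∀ (a : ℤ) (k : ℕ), (a : ℚ) * (r : ℚ)⁻¹ ^ k ∈ M := by
    intro a k
    simpa [zsmul_eq_mul] using M.smul_mem a (hpow k)
  have hsH : ∀ y ∈ M, (s : ℚ) * y ∈ H := by
    intro y hy
    exact ⟨y, hy, rfl⟩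
  -- key: every coset is an integer multiple of the coset of 1
  set N := H.addSubgroupOf K with hNdef
  set q : K ⧸ N := QuotientAddGroup.mk ⟨1, h1⟩ with hqdef
  have hq0 : (n : ℤ) • q = 0 := by
    rw [hqdef, ← QuotientAddGroup.mk_zsmul]
    rw [QuotientAddGroup.eq_zero_iff]
    rw [AddSubgroup.mem_addSubgroupOf]
    show (n : ℤ) • (1 : ℚ) ∈ H
    rcases Int.natAbs_eq s with h | h
    · rw [zsmul_eq_mul]
      have he : ((n : ℤ) : ℚ) = (s : ℚ) := by
        have : (n : ℤ) = s := by rw [hndef]; omega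
        exact_mod_cast congrArg (fun z : ℤ => (z : ℚ)) this
      rw [he]
      exact hsH 1 h1
    · rw [zsmul_eq_mul]
      have he : ((n : ℤ) : ℚ) = -(s : ℚ) := by
        have : (n : ℤ) = -s := by rw [hndef]; omega
        exact_mod_cast congrArg (fun z : ℤ => (z : ℚ)) this
      rw [he]
      have heq : -(s : ℚ) * 1 = -((s : ℚ) * 1) := by ring
      rw [heq]
      exact H.neg_mem (hsH 1 h1)
  have hgen : ∀ x : K, ∃ c : ℤ, (QuotientAddGroup.mk x : K ⧸ N) = c • q := by
    intro x
    obtain ⟨a, k, hx⟩ := aux_repr r hr x x.2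
    obtain ⟨c, m, j, heq⟩ := aux_congQ r s hr hs a k
    refine ⟨c, ?_⟩
    rw [hqdef, ← QuotientAddGroup.mk_zsmul, QuotientAddGroup.eq]
    rw [AddSubgroup.mem_addSubgroupOf]
    have hval : ((-x + c • (⟨1, h1⟩ : K)) : ℚ) = -((s : ℚ) * ((m : ℚ) * (r : ℚ)⁻¹ ^ j)) := by
      push_cast [zsmul_eq_mul]
      rw [hx]
      linarith [heq]
    show ((-x + c • (⟨1, h1⟩ : K)) : ℚ) ∈ H
    rw [hval]
    exact H.neg_mem (hsH _ (hmemM m j))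
  have hsurj : Function.Surjective (fun z : ZMod n => (((z.val : ℤ) • q) : K ⧸ N)) := by
    intro x
    induction x using QuotientAddGroup.induction_on with
    | H y =>
      obtain ⟨c, hc⟩ := hgen y
      refine ⟨(c : ZMod n), ?_⟩
      simp only
      have hval : (((c : ZMod n).val : ℤ)) = c % (n : ℤ) := ZMod.val_intCast c
      have : (((c : ZMod n).val : ℤ)) • q = c • q := by
        rw [hval, Int.emod_def, sub_smul, mul_comm, mul_smul, hq0, smul_zero, sub_zero]
      rw [this, hc]
  have hQfin : Finite (K ⧸ N) := Finite.of_surjective _ hsurj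
  have hcard : Nat.card (K ⧸ N) ≤ n := by
    calc Nat.card (K ⧸ N) ≤ Nat.card (ZMod n) := Nat.card_le_card_of_surjective _ hsurj
      _ = n := Nat.card_zmod n
  have hne : Nat.card (K ⧸ N) ≠ 0 := Nat.card_ne_zero.mpr ⟨⟨0⟩, hQfin⟩
  have hrel : H.relIndex K = Nat.card (K ⧸ N) := AddSubgroup.index_eq_card N
  exact ⟨hrel ▸ hcard, hrel ▸ hne⟩
end

section
/- Let V = ⋃_{i≥1} A^{-i} ℤ² ⊆ ℚ², where A is a 2×2 integer matrix with det(A) ≠ 0, and let W = ⋃_{i≥1} A^{-i}(pℤ)² for a prime p not dividing det(A). If w ∈ W is such that w/pˢ ∈ W for all s ≥ 1, then w = 0. -/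
open Matrix in
private lemma stmt15_castVec_mulVec (M : Matrix (Fin 2) (Fin 2) ℤ) (u : Fin 2 → ℤ) :
    (M.map (Int.cast : ℤ → ℚ)) *ᵥ (fun k => (u k : ℚ)) = fun k => ((M *ᵥ u) k : ℚ) := by
  funext k
  simp [Matrix.mulVec, dotProduct, Fin.sum_univ_two]

open Matrix in
private lemma stmt15_adj_mulVec (M : Matrix (Fin 2) (Fin 2) ℤ) (w : Fin 2 → ℚ) :
    (M.adjugate.map (Int.cast : ℤ → ℚ)) *ᵥ ((M.map (Int.cast : ℤ → ℚ)) *ᵥ w)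
      = (M.det : ℚ) • w := by
  funext k
  fin_cases k <;>
    simp [Matrix.adjugate_fin_two, Matrix.mulVec, dotProduct,
      Fin.sum_univ_two, Matrix.det_fin_two, Matrix.map_apply] <;>
    ring

private lemma stmt15_map_pow (A : Matrix (Fin 2) (Fin 2) ℤ) (i : ℕ) :
    (A.map (Int.cast : ℤ → ℚ)) ^ i = (A ^ i).map (Int.cast : ℤ → ℚ) := by
  have := map_pow ((Int.castRingHom ℚ).mapMatrix) A i
  simpa [RingHom.mapMatrix_apply] using this.symm

open Matrix in
/-- From `(A^i).map cast *ᵥ w = p^t • cast v`, deduce `(A.det^i : ℚ) • w = cast (p^t • adj *ᵥ v)`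
pointwise. -/
private lemma stmt15_key (A : Matrix (Fin 2) (Fin 2) ℤ) (i t : ℕ) (p : ℕ)
    (w : Fin 2 → ℚ) (v : Fin 2 → ℤ)
    (h : ((A.map (Int.cast : ℤ → ℚ)) ^ i) *ᵥ w = fun j => (p : ℚ) ^ t * (v j)) :
    ∀ k, ((A.det ^ i : ℤ) : ℚ) * w k = (((p : ℤ) ^ t * ((A ^ i).adjugate *ᵥ v) k : ℤ) : ℚ) := by
  intro k
  rw [stmt15_map_pow] at h
  have h2 := congrArg (fun x => ((A ^ i).adjugate.map (Int.cast : ℤ → ℚ)) *ᵥ x) h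
  rw [stmt15_adj_mulVec] at h2
  have h3 : ((A ^ i).adjugate.map (Int.cast : ℤ → ℚ)) *ᵥ (fun j => (p : ℚ) ^ t * (v j))
      = fun j => (p : ℚ) ^ t * ((((A ^ i).adjugate *ᵥ v) j : ℤ) : ℚ) := by
    have := stmt15_castVec_mulVec (A ^ i).adjugate v
    funext j
    simp [Matrix.mulVec, dotProduct, Fin.sum_univ_two]
    ring
  rw [h3] at h2
  have := congrFun h2 k
  simp only [Pi.smul_apply, smul_eq_mul] at this
  rw [Matrix.det_pow] at this
  push_cast
  push_cast at this
  linarith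

open Matrix

/-- Let `V = ⋃_{i≥1} A⁻ⁱ ℤ² ⊆ ℚ²` for a `2×2` integer matrix `A` with `det A ≠ 0`, and
`W = ⋃_{i≥1} A⁻ⁱ (pℤ)²` for a prime `p ∤ det A`; membership `w ∈ A⁻ⁱ(pℤ)²` means
`Aⁱ w ∈ (pℤ)²`. If `w ∈ W` and `w/pˢ ∈ W` for all `s ≥ 1`, then `w = 0`. -/
theorem stmt_15 (A : Matrix (Fin 2) (Fin 2) ℤ) (hA : A.det ≠ 0)
    (p : ℕ) (hp : p.Prime) (hpd : ¬ ((p : ℤ) ∣ A.det))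
    (w : Fin 2 → ℚ)
    (hw : ∃ i : ℕ, 1 ≤ i ∧ ∃ v : Fin 2 → ℤ,
      ((A.map (Int.cast : ℤ → ℚ)) ^ i).mulVec w = fun j => (p : ℚ) * (v j))
    (hws : ∀ s : ℕ, 1 ≤ s → ∃ i : ℕ, 1 ≤ i ∧ ∃ v : Fin 2 → ℤ,
      ((A.map (Int.cast : ℤ → ℚ)) ^ i).mulVec (fun j => w j / (p : ℚ) ^ s) =
        fun j => (p : ℚ) * (v j)) :
    w = 0 := by
  obtain ⟨i0, hi0, v0, hv0⟩ := hw
  have hp1 : (1:ℚ) ≤ p := by exact_mod_cast hp.one_lt.le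
  have hppos : (0:ℚ) < p := by positivity
  -- w k = z k / d with d = A.det ^ i0
  have hd : (A.det ^ i0 : ℤ) ≠ 0 := pow_ne_zero _ hA
  have hv0' : ((A.map (Int.cast : ℤ → ℚ)) ^ i0) *ᵥ w = fun j => (p : ℚ) ^ 1 * (v0 j) := by
    simpa using hv0
  have hz := stmt15_key A i0 1 p w v0 hv0'
  set z : Fin 2 → ℤ := fun k => (p : ℤ) ^ 1 * ((A ^ i0).adjugate.mulVec v0) k with hzdef
  -- main: each z k is divisible by arbitrarily high powers of p
  have hdvd : ∀ k, ∀ s : ℕ, (p : ℤ) ^ (s + 1) ∣ z k := by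
    intro k s
    obtain ⟨j, hj, u, hu⟩ := hws (s + 1) (Nat.le_add_left 1 s)
    -- rescale: A^j w = p^(s+2) • u
    have hu' : ((A.map (Int.cast : ℤ → ℚ)) ^ j) *ᵥ w = fun l => (p : ℚ) ^ (s + 2) * (u l) := by
      have hw_eq : w = fun l => (p : ℚ) ^ (s + 1) * (w l / (p : ℚ) ^ (s + 1)) := by
        funext l
        field_simp
      rw [hw_eq]
      have hlin : ((A.map (Int.cast : ℤ → ℚ)) ^ j) *ᵥ
          (fun l => (p : ℚ) ^ (s + 1) * (w l / (p : ℚ) ^ (s + 1)))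
          = (p : ℚ) ^ (s + 1) • (((A.map (Int.cast : ℤ → ℚ)) ^ j) *ᵥ
            (fun l => w l / (p : ℚ) ^ (s + 1))) := by
        have := Matrix.mulVec_smul ((A.map (Int.cast : ℤ → ℚ)) ^ j)
          ((p : ℚ) ^ (s + 1)) (fun l => w l / (p : ℚ) ^ (s + 1))
        simpa [Pi.smul_def, smul_eq_mul] using this
      rw [hlin, hu]
      funext l
      simp [smul_eq_mul]
      ring
    have hkey := stmt15_key A j (s + 2) p w u hu'
    have h1 := hz k
    have h2 := hkey k
    push_cast at h1 h2
    set X : ℤ := ((A ^ i0).adjugate.mulVec v0) k with hX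
    set Y : ℤ := ((A ^ j).adjugate.mulVec u) k with hY
    have hq : (A.det : ℚ) ^ j * ((p : ℚ) ^ 1 * (X : ℚ)) =
        (A.det : ℚ) ^ i0 * ((p : ℚ) ^ (s + 2) * (Y : ℚ)) := by
      rw [← h1, ← h2, ← Int.cast_det]; ring
    have hint : A.det ^ j * ((p : ℤ) ^ 1 * X) = A.det ^ i0 * ((p : ℤ) ^ (s + 2) * Y) := by
      exact_mod_cast hq
    have hpP : Prime (p : ℤ) := Nat.prime_iff_prime_int.mp hp
    have hcop : IsCoprime ((p : ℤ) ^ (s + 1)) (A.det ^ j) :=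
      (((hpP.coprime_iff_not_dvd).mpr hpd).pow : IsCoprime ((p:ℤ)^(s+1)) (A.det ^ j))
    have hzk : z k = (p : ℤ) ^ 1 * X := rfl
    have hdvd2 : (p : ℤ) ^ (s + 1) ∣ A.det ^ j * z k := by
      rw [hzk, hint]
      exact Dvd.dvd.mul_left (Dvd.dvd.mul_right (pow_dvd_pow _ (by omega)) _) _
    exact hcop.dvd_of_dvd_mul_left hdvd2
  -- conclude each z k = 0
  have hz0 : ∀ k, z k = 0 := by
    intro k
    by_contra hne
    have hnat : ∀ s : ℕ, p ^ (s + 1) ∣ (z k).natAbs := by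
      intro s
      have h := Int.natAbs_dvd_natAbs.mpr (hdvd k s)
      rwa [Int.natAbs_pow, Int.natAbs_natCast] at h
    have hpos : 0 < (z k).natAbs := Int.natAbs_pos.mpr hne
    set n := (z k).natAbs
    have hle : p ^ (n + 1) ≤ n := Nat.le_of_dvd hpos (hnat n)
    have hlt : n < p ^ (n + 1) := by
      calc n < p ^ n := Nat.lt_pow_self (n := n) hp.one_lt
        _ ≤ p ^ (n + 1) := Nat.pow_le_pow_right hp.pos (by omega)
    omega
  -- hence w = 0
  funext k
  show w k = 0
  have h1 : ((A.det ^ i0 : ℤ) : ℚ) * w k = ((z k : ℤ) : ℚ) := hz k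
  rw [hz0 k] at h1
  have hdq : ((A.det ^ i0 : ℤ) : ℚ) ≠ 0 := Int.cast_ne_zero.mpr hd
  simp only [Int.cast_zero] at h1
  exact (mul_eq_zero.mp h1).resolve_left hdq
end

section
/- Every ascending HNN extension G of ℤⁿ along an injective non-surjective endomorphism φ (given by an integer matrix with nonzero determinant) embeds into ℚⁿ ⋊ GL_n(ℚ), and hence into GL_{n+1}(ℚ); in particular G is linear over ℚ and residually finite. -/
/-- The natural action of `GL n R` on `Multiplicative (Rⁿ)` by matrix-vector
multiplication. -/
def affAct (n : ℕ) (R : Type) [CommRing R] :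
    GL (Fin n) R →* MulAut (Multiplicative (Fin n → R)) where
  toFun A :=
    { toFun := fun v =>
        Multiplicative.ofAdd ((A : Matrix (Fin n) (Fin n) R).mulVec v.toAdd)
      invFun := fun v =>
        Multiplicative.ofAdd (((A⁻¹ : GL (Fin n) R) : Matrix (Fin n) (Fin n) R).mulVec v.toAdd)
      left_inv := by
        intro v
        simp [Matrix.mulVec_mulVec]
      right_inv := by
        intro v
        simp [Matrix.mulVec_mulVec]
      map_mul' := by
        intro v w
        simp [Matrix.mulVec_add, ofAdd_add] }
  map_one' := by
    ext v
    simp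
  map_mul' := by
    intro A B
    ext v
    simp [Matrix.mulVec_mulVec]

section aux

open HNNExtension

variable {G : Type*} [Group G] {B : Subgroup G} (e : (⊤ : Subgroup G) ≃* B)

/-- The endomorphism of `G` induced by `e`. -/
def psiE : G →* G :=
  B.subtype.comp (e.toMonoidHom.comp (Subgroup.topEquiv (G := G)).symm.toMonoidHom)

lemma psiE_apply (g : G) : psiE e g = (e ⟨g, Subgroup.mem_top g⟩ : G) := rfl

lemma t_mul_of_top (g : G) :
    (t : HNNExtension G ⊤ B e) * of g = of (psiE e g) * t := by
  simpa [psiE_apply] using HNNExtension.t_mul_of (φ := e) ⟨g, Subgroup.mem_top g⟩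

lemma t_pow_mul_of_top (j : ℕ) (g : G) :
    (t : HNNExtension G ⊤ B e) ^ j * of g = of ((psiE e)^[j] g) * t ^ j := by
  induction j generalizing g with
  | zero => simp
  | succ j ih =>
    rw [pow_succ, mul_assoc, t_mul_of_top, ← mul_assoc, ih, mul_assoc, ← pow_succ,
      ← Function.iterate_succ_apply]

lemma of_mul_t_inv_pow (j : ℕ) (g : G) :
    (of g : HNNExtension G ⊤ B e) * (t⁻¹) ^ j = (t⁻¹) ^ j * of ((psiE e)^[j] g) := by
  have h2 : (of ((psiE e)^[j] g) : HNNExtension G ⊤ B e) = t ^ j * of g * (t ^ j)⁻¹ := by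
    rw [eq_comm, mul_inv_eq_iff_eq_mul]; exact t_pow_mul_of_top e j g
  rw [inv_pow, h2]; group

lemma hnn_decomp (x : HNNExtension G ⊤ B e) :
    ∃ (k m : ℕ) (g : G), x = (t⁻¹) ^ k * of g * t ^ m := by
  induction x using HNNExtension.induction_on with
  | of g => exact ⟨0, 0, g, by simp⟩
  | t => exact ⟨0, 1, 1, by simp⟩
  | inv x hx =>
    obtain ⟨k, m, g, rfl⟩ := hx
    refine ⟨m, k, g⁻¹, ?_⟩
    rw [map_inv]; group
  | mul x y hx hy =>
    obtain ⟨k, m, g, rfl⟩ := hx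
    obtain ⟨k', m', g', rfl⟩ := hy
    rcases le_total k' m with h | h
    · refine ⟨k, m - k' + m', g * (psiE e)^[m - k'] g', ?_⟩
      have hm : (t : HNNExtension G ⊤ B e) ^ m = t ^ (m - k') * t ^ k' := by
        rw [← pow_add, Nat.sub_add_cancel h]
      rw [hm, map_mul]
      calc (t⁻¹) ^ k * of g * (t ^ (m - k') * t ^ k') * ((t⁻¹) ^ k' * of g' * t ^ m')
          = (t⁻¹) ^ k * of g * (t ^ (m - k') * of g') * t ^ m' := by
            rw [inv_pow]; group
        _ = (t⁻¹) ^ k * (of g * of ((psiE e)^[m - k'] g')) * (t ^ (m - k') * t ^ m') := by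
            rw [t_pow_mul_of_top]; group
        _ = (t⁻¹) ^ k * (of g * of ((psiE e)^[m - k'] g')) * t ^ (m - k' + m') := by
            rw [pow_add]
    · refine ⟨k + (k' - m), m', (psiE e)^[k' - m] g * g', ?_⟩
      have hk : ((t : HNNExtension G ⊤ B e)⁻¹) ^ k' = (t⁻¹) ^ (k' - m) * (t⁻¹) ^ m := by
        rw [← pow_add, Nat.sub_add_cancel h]
      rw [hk, map_mul]
      calc (t⁻¹) ^ k * of g * t ^ m * ((t⁻¹) ^ (k' - m) * (t⁻¹) ^ m * of g' * t ^ m')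
          = (t⁻¹) ^ k * (of g * (t⁻¹) ^ (k' - m)) * of g' * t ^ m' := by
            rw [inv_pow]; group
        _ = (t⁻¹) ^ k * ((t⁻¹) ^ (k' - m) * of ((psiE e)^[k' - m] g)) * of g' * t ^ m' := by
            rw [of_mul_t_inv_pow]
        _ = (t⁻¹) ^ (k + (k' - m)) * (of ((psiE e)^[k' - m] g) * of g') * t ^ m' := by
            rw [pow_add]; group

open HNNExtension SemidirectProduct

/-- Coordinatewise cast `ℤ → R` as a hom of multiplicative groups. -/
def castMulHom (n : ℕ) (R : Type) [CommRing R] :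
    Multiplicative (Fin n → ℤ) →* Multiplicative (Fin n → R) where
  toFun v := Multiplicative.ofAdd fun i => ((v.toAdd i : ℤ) : R)
  map_one' := by
    simp only [toAdd_one, Pi.zero_apply, Int.cast_zero]
    rfl
  map_mul' x y := by
    simp only [toAdd_mul, Pi.add_apply, Int.cast_add]
    rw [← ofAdd_add]
    rfl

section rep

variable (n : ℕ) (M₀ : Matrix (Fin n) (Fin n) ℤ)
    (φ : Multiplicative (Fin n → ℤ) →* Multiplicative (Fin n → ℤ))
    (hφ : ∀ v : Fin n → ℤ, (φ (Multiplicative.ofAdd v)).toAdd = M₀.mulVec v)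
    (e : (⊤ : Subgroup (Multiplicative (Fin n → ℤ))) ≃* φ.range)
    (he : ∀ g, (e ⟨g, Subgroup.mem_top g⟩ : Multiplicative (Fin n → ℤ)) = φ g)
    (R : Type) [CommRing R] (MR : GL (Fin n) R)
    (hMR : (MR : Matrix (Fin n) (Fin n) R) = M₀.map (Int.cast : ℤ → R))

include hφ in
lemma phi_apply (v : Fin n → ℤ) :
    φ (Multiplicative.ofAdd v) = Multiplicative.ofAdd (M₀.mulVec v) := by
  rw [← hφ v]; rfl

include hφ he hMR in
lemma rep_cond : ∀ a : (⊤ : Subgroup (Multiplicative (Fin n → ℤ))),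
    (inr MR : Multiplicative (Fin n → R) ⋊[affAct n R] GL (Fin n) R) *
      (inl.comp (castMulHom n R)) ↑a =
      (inl.comp (castMulHom n R)) (e a : Multiplicative (Fin n → ℤ)) * inr MR := by
  intro a
  have key : (affAct n R) MR (castMulHom n R ↑a) = castMulHom n R (e a : _) := by
    have ha : (a : Multiplicative (Fin n → ℤ)) =
        Multiplicative.ofAdd (Multiplicative.toAdd (a : Multiplicative (Fin n → ℤ))) := rfl
    have he' : (e a : Multiplicative (Fin n → ℤ)) = φ ↑a := he ↑a
    rw [he', ha, phi_apply n M₀ φ hφ]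
    show Multiplicative.ofAdd ((MR : Matrix (Fin n) (Fin n) R).mulVec
        (fun i => ((Multiplicative.toAdd (a : Multiplicative (Fin n → ℤ)) i : ℤ) : R))) = _
    show _ = Multiplicative.ofAdd fun i => ((M₀.mulVec (Multiplicative.toAdd ↑a) i : ℤ) : R)
    congr 1
    funext i
    rw [hMR]
    exact ((Int.castRingHom R).map_mulVec M₀
      (Multiplicative.toAdd (a : Multiplicative (Fin n → ℤ))) i).symm
  rw [MonoidHom.comp_apply, MonoidHom.comp_apply, ← key, inl_aut]
  simp [mul_assoc, ← map_mul]

/-- The representation of the ascending HNN extension. -/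
noncomputable def rep : HNNExtension (Multiplicative (Fin n → ℤ)) ⊤ φ.range e →*
    Multiplicative (Fin n → R) ⋊[affAct n R] GL (Fin n) R :=
  HNNExtension.lift (inl.comp (castMulHom n R)) (inr MR) (rep_cond n M₀ φ hφ e he R MR hMR)

lemma rep_apply (k m : ℕ) (a : Multiplicative (Fin n → ℤ)) :
    rep n M₀ φ hφ e he R MR hMR ((t⁻¹) ^ k * of a * t ^ m) =
      inr (MR⁻¹ ^ k) * inl (castMulHom n R a) * inr (MR ^ m) := by
  simp [rep, map_mul, map_pow, map_inv]

lemma sandwich_eq_one (A B : GL (Fin n) R) (w : Multiplicative (Fin n → R)) :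
    (inr A * inl w * inr B : Multiplicative (Fin n → R) ⋊[affAct n R] GL (Fin n) R) = 1 ↔
      w = 1 ∧ A * B = 1 := by
  constructor
  · intro h
    have hl := congrArg SemidirectProduct.left h
    have hr := congrArg SemidirectProduct.right h
    simp only [mul_left, mul_right, left_inl, right_inl, left_inr, right_inr, one_left,
      one_right, map_one, mul_one, one_mul] at hl hr
    refine ⟨?_, hr⟩
    have := congrArg (affAct n R A)⁻¹ hl
    simpa using this
  · rintro ⟨h1, h2⟩
    ext <;>
      simp [mul_left, mul_right, left_inl, right_inl, left_inr, right_inr, h1, h2]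

end rep

section inj

variable (n : ℕ) (M₀ : Matrix (Fin n) (Fin n) ℤ)
    (φ : Multiplicative (Fin n → ℤ) →* Multiplicative (Fin n → ℤ))
    (hφ : ∀ v : Fin n → ℤ, (φ (Multiplicative.ofAdd v)).toAdd = M₀.mulVec v)
    (e : (⊤ : Subgroup (Multiplicative (Fin n → ℤ))) ≃* φ.range)
    (he : ∀ g, (e ⟨g, Subgroup.mem_top g⟩ : Multiplicative (Fin n → ℤ)) = φ g)

include hφ in
lemma surj_of_isUnit_det (hu : IsUnit M₀.det) : Function.Surjective φ := by
  intro w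
  refine ⟨Multiplicative.ofAdd ((M₀⁻¹).mulVec w.toAdd), ?_⟩
  rw [phi_apply n M₀ φ hφ, Matrix.mulVec_mulVec, Matrix.mul_nonsing_inv M₀ hu,
    Matrix.one_mulVec]
  rfl

include hφ in
lemma two_le_natAbs (hdet : M₀.det ≠ 0) (hnsurj : ¬ Function.Surjective φ) :
    2 ≤ M₀.det.natAbs := by
  by_contra h
  push_neg at h
  interval_cases hh : M₀.det.natAbs
  · exact hdet (Int.natAbs_eq_zero.1 hh)
  · exact hnsurj (surj_of_isUnit_det n M₀ φ hφ (Int.isUnit_iff_natAbs_eq.2 hh))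

lemma castMulHom_eq_one_iff {R : Type} [CommRing R] [CharZero R]
    {a : Multiplicative (Fin n → ℤ)} (h : castMulHom n R a = 1) : a = 1 := by
  have h' := congrArg Multiplicative.toAdd h
  have h'' : ∀ i, ((a.toAdd i : ℤ) : R) = 0 := fun i => congrFun h' i
  have : a.toAdd = 0 := funext fun i => by exact_mod_cast h'' i
  calc a = Multiplicative.ofAdd a.toAdd := rfl
    _ = 1 := by rw [this]; rfl

variable (MQ : GL (Fin n) ℚ)
    (hMQ : (MQ : Matrix (Fin n) (Fin n) ℚ) = M₀.map (Int.cast : ℤ → ℚ))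

include hφ hMQ in
lemma pow_eq_of_det (hdet : M₀.det ≠ 0) (hnsurj : ¬ Function.Surjective φ)
    {k m : ℕ} (h3 : MQ ^ m = MQ ^ k) : m = k := by
  have hd : Matrix.det (MQ : Matrix (Fin n) (Fin n) ℚ) = (M₀.det : ℚ) := by
    rw [hMQ]
    exact ((Int.castRingHom ℚ).map_det M₀).symm
  have hdm : ((M₀.det : ℚ)) ^ m = ((M₀.det : ℚ)) ^ k := by
    have := congrArg (fun u : GL (Fin n) ℚ => Matrix.det (u : Matrix (Fin n) (Fin n) ℚ)) h3
    simpa [Units.val_pow_eq_pow_val, Matrix.det_pow, hd] using this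
  have hint : M₀.det ^ m = M₀.det ^ k := by exact_mod_cast hdm
  have hnat : M₀.det.natAbs ^ m = M₀.det.natAbs ^ k := by
    have := congrArg Int.natAbs hint
    simpa [Int.natAbs_pow] using this
  exact Nat.pow_right_injective (two_le_natAbs n M₀ φ hφ hdet hnsurj) hnat

include hφ hMQ in
lemma rep_injective (hdet : M₀.det ≠ 0) (hnsurj : ¬ Function.Surjective φ) :
    Function.Injective (rep n M₀ φ hφ e he ℚ MQ hMQ) := by
  rw [injective_iff_map_eq_one]
  intro x hx
  obtain ⟨k, m, a, rfl⟩ := hnn_decomp e x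
  rw [rep_apply, sandwich_eq_one] at hx
  obtain ⟨h1, h2⟩ := hx
  have h3 : MQ ^ m = MQ ^ k := by
    have := congrArg (fun z => MQ ^ k * z) h2
    simpa [inv_pow, ← mul_assoc] using this
  have hmk : m = k := pow_eq_of_det n M₀ φ hφ MQ hMQ hdet hnsurj h3
  have ha : a = 1 := castMulHom_eq_one_iff n h1
  subst hmk
  rw [ha]
  simp [inv_pow]

end inj

section glemb

/-- Column matrix. -/
def colv {n : ℕ} {R : Type} [CommRing R] (v : Fin n → R) : Matrix (Fin n) (Fin 1) R :=
  Matrix.of fun i _ => v i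

variable {n : ℕ}

lemma mul_colv {R : Type} [CommRing R] (A : Matrix (Fin n) (Fin n) R) (v : Fin n → R) :
    A * colv v = colv (A.mulVec v) := by
  ext i j
  simp [colv, Matrix.mul_apply, Matrix.mulVec, dotProduct]

lemma colv_add {R : Type} [CommRing R] (v w : Fin n → R) :
    colv (v + w) = colv v + colv w := by
  ext i j; simp [colv]

lemma colv_zero {R : Type} [CommRing R] : colv (0 : Fin n → R) = 0 := by
  ext i j; simp [colv]

/-- The affine embedding of `ℚⁿ ⋊ GL n ℚ` into block matrices. -/
noncomputable def affgl (n : ℕ) : (Multiplicative (Fin n → ℚ) ⋊[affAct n ℚ] GL (Fin n) ℚ) →*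
    (Matrix (Fin n ⊕ Fin 1) (Fin n ⊕ Fin 1) ℚ)ˣ where
  toFun p :=
    { val := Matrix.fromBlocks (p.right : Matrix (Fin n) (Fin n) ℚ) (colv p.left.toAdd) 0 1
      inv := Matrix.fromBlocks ((p.right : Matrix (Fin n) (Fin n) ℚ))⁻¹
          (colv (-(((p.right : Matrix (Fin n) (Fin n) ℚ))⁻¹.mulVec p.left.toAdd))) 0 1
      val_inv := by
        have h1 : (p.right : Matrix (Fin n) (Fin n) ℚ) *
            ((p.right : Matrix (Fin n) (Fin n) ℚ))⁻¹ = 1 := by simpa using p.right.mul_inv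
        simp [Matrix.fromBlocks_multiply, mul_colv, Matrix.mulVec_neg, Matrix.mulVec_mulVec,
          h1, Matrix.one_mulVec, ← colv_add, colv_zero, Matrix.fromBlocks_one]
      inv_val := by
        have h1 : ((p.right : Matrix (Fin n) (Fin n) ℚ))⁻¹ *
            (p.right : Matrix (Fin n) (Fin n) ℚ) = 1 := by simpa using p.right.inv_mul
        simp [Matrix.fromBlocks_multiply, mul_colv, Matrix.mulVec_neg, Matrix.mulVec_mulVec,
          h1, Matrix.one_mulVec, ← colv_add, colv_zero, Matrix.fromBlocks_one] }
  map_one' := by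
    apply Units.ext
    show Matrix.fromBlocks _ _ _ _ = (1 : Matrix (Fin n ⊕ Fin 1) (Fin n ⊕ Fin 1) ℚ)
    rw [show Multiplicative.toAdd
        ((1 : Multiplicative (Fin n → ℚ) ⋊[affAct n ℚ] GL (Fin n) ℚ).left) = 0 from by simp,
      colv_zero, show ((((1 : Multiplicative (Fin n → ℚ) ⋊[affAct n ℚ] GL (Fin n) ℚ).right) :
        Matrix (Fin n) (Fin n) ℚ)) = 1 from by simp, Matrix.fromBlocks_one]
  map_mul' p q := by
    apply Units.ext
    show Matrix.fromBlocks _ _ _ _ = Matrix.fromBlocks _ _ _ _ * Matrix.fromBlocks _ _ _ _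
    rw [Matrix.fromBlocks_multiply]
    have haff : Multiplicative.toAdd (((affAct n ℚ) p.right) q.left) =
        (p.right : Matrix (Fin n) (Fin n) ℚ).mulVec q.left.toAdd := rfl
    rw [show Multiplicative.toAdd ((p * q).left) =
        p.left.toAdd + (p.right : Matrix (Fin n) (Fin n) ℚ).mulVec q.left.toAdd from by
      rw [SemidirectProduct.mul_left, toAdd_mul, haff]]
    rw [show ((p * q).right : Matrix (Fin n) (Fin n) ℚ) =
        (p.right : Matrix (Fin n) (Fin n) ℚ) * (q.right : Matrix (Fin n) (Fin n) ℚ) from by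
      rw [SemidirectProduct.mul_right]; rfl]
    rw [colv_add, mul_colv, add_comm]
    simp

lemma affgl_injective (n : ℕ) : Function.Injective (affgl n) := by
  intro p q h
  have hv := congrArg Units.val h
  have hr : (p.right : Matrix (Fin n) (Fin n) ℚ) = q.right := by
    ext i j
    exact congrFun (congrFun hv (Sum.inl i)) (Sum.inl j)
  have hl : p.left.toAdd = q.left.toAdd := by
    funext i
    exact congrFun (congrFun hv (Sum.inl i)) (Sum.inr 0)
  apply SemidirectProduct.ext
  · exact congrArg Multiplicative.ofAdd hl
  · exact Units.ext hr

/-- Transport to `GL (Fin (n+1)) ℚ`. -/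
def reFin (n : ℕ) : (Matrix (Fin n ⊕ Fin 1) (Fin n ⊕ Fin 1) ℚ)ˣ ≃* GL (Fin (n + 1)) ℚ :=
  Units.mapEquiv (Matrix.reindexAlgEquiv ℚ ℚ finSumFinEquiv).toRingEquiv.toMulEquiv

end glemb

section fin

lemma sdp_finite {N G : Type} [Group N] [Group G] (ψ : G →* MulAut N)
    [Finite N] [Finite G] : Finite (N ⋊[ψ] G) :=
  Finite.of_injective (fun p => (p.left, p.right)) (by
    intro a b h
    exact SemidirectProduct.ext (congrArg Prod.fst h) (congrArg Prod.snd h))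

variable {G : Type*} [Group G] {B : Subgroup G} (e : (⊤ : Subgroup G) ≃* B)

/-- The `t`-exponent-sum homomorphism. -/
def chi : HNNExtension G ⊤ B e →* Multiplicative ℤ :=
  HNNExtension.lift 1 (Multiplicative.ofAdd 1) (by intro a; simp)

lemma ofAdd_one_pow (j : ℕ) :
    (Multiplicative.ofAdd (1 : ℤ)) ^ j = Multiplicative.ofAdd (j : ℤ) := by
  rw [← ofAdd_nsmul]
  norm_num

lemma chi_apply (k m : ℕ) (a : G) :
    chi e ((HNNExtension.t⁻¹) ^ k * HNNExtension.of a * HNNExtension.t ^ m) =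
      Multiplicative.ofAdd ((m : ℤ) - (k : ℤ)) := by
  have h1 : chi e HNNExtension.t = Multiplicative.ofAdd (1 : ℤ) := by
    simp [chi]
  have h2 : chi e (HNNExtension.of a) = 1 := by
    simp [chi]
  rw [map_mul, map_mul, map_pow, map_pow, map_inv, h1, h2, mul_one, inv_pow,
    ofAdd_one_pow, ofAdd_one_pow, ← ofAdd_neg, ← ofAdd_add]
  congr 1
  ring

end fin

end aux

open HNNExtension SemidirectProduct

/-- Every ascending HNN extension `G` of `ℤⁿ` along an injective non-surjective
endomorphism `φ` (given by an integer matrix `M₀` with nonzero determinant) embeds into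
`ℚⁿ ⋊ GL_n(ℚ)`, hence into `GL_{n+1}(ℚ)`; in particular `G` is linear over `ℚ` and
residually finite. -/
theorem stmt_18 (n : ℕ) (M₀ : Matrix (Fin n) (Fin n) ℤ) (hdet : M₀.det ≠ 0)
    (φ : Multiplicative (Fin n → ℤ) →* Multiplicative (Fin n → ℤ))
    (hφ : ∀ v : Fin n → ℤ, (φ (Multiplicative.ofAdd v)).toAdd = M₀.mulVec v)
    (hinj : Function.Injective φ) (hnsurj : ¬ Function.Surjective φ)
    (hfi : φ.range.FiniteIndex)
    (e : (⊤ : Subgroup (Multiplicative (Fin n → ℤ))) ≃* φ.range)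
    (he : ∀ g, (e ⟨g, Subgroup.mem_top g⟩ : Multiplicative (Fin n → ℤ)) = φ g) :
    (∃ f : HNNExtension (Multiplicative (Fin n → ℤ)) ⊤ φ.range e →*
        (Multiplicative (Fin n → ℚ)) ⋊[affAct n ℚ] GL (Fin n) ℚ,
      Function.Injective f) ∧
    (∃ f : HNNExtension (Multiplicative (Fin n → ℤ)) ⊤ φ.range e →* GL (Fin (n + 1)) ℚ,
      Function.Injective f) ∧
    (∀ g : HNNExtension (Multiplicative (Fin n → ℤ)) ⊤ φ.range e, g ≠ 1 →
      ∃ K : Subgroup (HNNExtension (Multiplicative (Fin n → ℤ)) ⊤ φ.range e),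
        K.Normal ∧ K.FiniteIndex ∧ g ∉ K) := by
  have hdetQ : ((M₀.map (Int.cast : ℤ → ℚ)).det) ≠ 0 := by
    have hmap : (M₀.map (Int.cast : ℤ → ℚ)).det = ((M₀.det : ℚ)) :=
      ((Int.castRingHom ℚ).map_det M₀).symm
    rw [hmap]
    exact_mod_cast hdet
  set MQ : GL (Fin n) ℚ := Matrix.GeneralLinearGroup.mkOfDetNeZero _ hdetQ with hMQdef
  have hMQ : (MQ : Matrix (Fin n) (Fin n) ℚ) = M₀.map (Int.cast : ℤ → ℚ) := rfl
  have hf₁ : Function.Injective (rep n M₀ φ hφ e he ℚ MQ hMQ) :=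
    rep_injective n M₀ φ hφ e he MQ hMQ hdet hnsurj
  refine ⟨⟨rep n M₀ φ hφ e he ℚ MQ hMQ, hf₁⟩,
    ⟨(reFin n).toMonoidHom.comp ((affgl n).comp (rep n M₀ φ hφ e he ℚ MQ hMQ)), ?_⟩, ?_⟩
  · exact (reFin n).injective.comp ((affgl_injective n).comp hf₁)
  · intro g hg
    obtain ⟨k, m, a, rfl⟩ := hnn_decomp e g
    by_cases hkm : m = k
    · subst hkm
      have ha : a ≠ 1 := by
        rintro rfl
        refine hg ?_
        simp [inv_pow]
      obtain ⟨i, hi⟩ : ∃ i, a.toAdd i ≠ 0 := by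
        by_contra hcon
        push_neg at hcon
        refine ha ?_
        have : a.toAdd = 0 := funext hcon
        calc a = Multiplicative.ofAdd a.toAdd := rfl
          _ = 1 := by rw [this]; rfl
      have hd1 : 1 ≤ M₀.det.natAbs := Int.natAbs_pos.2 hdet
      have hai1 : 1 ≤ (a.toAdd i).natAbs := Int.natAbs_pos.2 hi
      set d := M₀.det.natAbs with hd
      set ai := (a.toAdd i).natAbs with hai
      set q := d * ai + 1 with hq
      have hdq : Nat.Coprime d q := by
        rw [hq]
        have := (Nat.coprime_mul_left_add_right d 1 ai).2 (Nat.coprime_one_right d)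
        simpa [add_comm] using this
      have hunit : IsUnit ((M₀.map (Int.cast : ℤ → ZMod q)).det) := by
        have hmap : (M₀.map (Int.cast : ℤ → ZMod q)).det = ((M₀.det : ZMod q)) :=
          ((Int.castRingHom (ZMod q)).map_det M₀).symm
        rw [hmap]
        rcases Int.natAbs_eq M₀.det with hcase | hcase
        · rw [hcase, Int.cast_natCast]
          exact (ZMod.isUnit_iff_coprime d q).2 hdq
        · rw [hcase, Int.cast_neg, Int.cast_natCast]
          exact ((ZMod.isUnit_iff_coprime d q).2 hdq).neg
      set Mq : GL (Fin n) (ZMod q) := Matrix.GeneralLinearGroup.mk'' _ hunit with hMqdef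
      have hMq : (Mq : Matrix (Fin n) (Fin n) (ZMod q)) = M₀.map (Int.cast : ℤ → ZMod q) := rfl
      set ρ := rep n M₀ φ hφ e he (ZMod q) Mq hMq with hρ
      haveI : Finite (Multiplicative (Fin n → ZMod q) ⋊[affAct n (ZMod q)]
          GL (Fin n) (ZMod q)) := sdp_finite _
      haveI : Finite ρ.range := Subtype.finite
      refine ⟨ρ.ker, inferInstance, inferInstance, ?_⟩
      intro hker
      rw [MonoidHom.mem_ker, hρ, rep_apply, sandwich_eq_one] at hker
      obtain ⟨h1, -⟩ := hker
      have hz : ((a.toAdd i : ℤ) : ZMod q) = 0 := congrFun (congrArg Multiplicative.toAdd h1) i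
      rw [ZMod.intCast_zmod_eq_zero_iff_dvd] at hz
      have hdvd : q ∣ ai := by
        have := Int.natAbs_dvd_natAbs.2 hz
        simpa [hai] using this
      have := Nat.le_of_dvd (by omega) hdvd
      nlinarith
    · set N := ((m : ℤ) - (k : ℤ)).natAbs + 1 with hN
      set χ := (AddMonoidHom.toMultiplicative (Int.castAddHom (ZMod N))).comp (chi e) with hχ
      haveI : Finite χ.range := Subtype.finite
      refine ⟨χ.ker, inferInstance, inferInstance, ?_⟩
      intro hker
      rw [MonoidHom.mem_ker] at hker
      have hval : χ ((t⁻¹) ^ k * of a * t ^ m) =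
          Multiplicative.ofAdd ((((m : ℤ) - (k : ℤ)) : ℤ) : ZMod N) := by
        rw [hχ, MonoidHom.comp_apply, chi_apply]
        rfl
      rw [hval] at hker
      have hz : ((((m : ℤ) - (k : ℤ)) : ℤ) : ZMod N) = 0 := by
        have := congrArg Multiplicative.toAdd hker
        simpa using this
      rw [ZMod.intCast_zmod_eq_zero_iff_dvd] at hz
      have hdvd : N ∣ ((m : ℤ) - (k : ℤ)).natAbs := by
        have := Int.natAbs_dvd_natAbs.2 hz
        simpa using this
      have hne : ((m : ℤ) - (k : ℤ)).natAbs ≠ 0 := by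
        simp only [ne_eq, Int.natAbs_eq_zero, sub_eq_zero]
        exact_mod_cast fun hcon => hkm (by exact_mod_cast hcon)
      have := Nat.le_of_dvd (by omega) hdvd
      omega
end
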